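/- If a graph G on n vertices is a (k,α)-expander (with α ≥ 1 and k a positive integer, n > k), then G contains a path of length at least ⌊αk⌋ (in edges). In particular, a (k,2)-expander contains a path of length at least 2k. -/
import Mathlib


open scoped Classical

/-- External neighborhood of a vertex set `S` in a graph `G`. -/
noncomputable def extNbhd {V : Type*} [Fintype V] [DecidableEq V]
    (G : SimpleGraph V) (S : Finset V) : Finset V :=
  Finset.univ.filter (fun v => v ∉ S ∧ ∃ u ∈ S, G.Adj u v)

private lemma dfs_key {V : Type*} [Fintype V] [DecidableEq V] (G : SimpleGraph V)
    (k : ℕ) (α : ℝ) (hk : 0 < k) (hcard : k < Fintype.card V)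
    (hexp : ∀ U : Finset V, U.card ≤ k → α * U.card ≤ ((extNbhd G U).card : ℝ)) :
    ∀ m : ℕ, ∀ (S : Finset V) (u v : V) (p : G.Walk u v),
      (Fintype.card V + 1) * (k - S.card) + (Fintype.card V - p.length) ≤ m →
      p.IsPath → S.card < k →
      (∀ x ∈ S, x ∉ p.support) →
      (∀ x ∈ extNbhd G S, x ∈ p.support) →
      ∃ (a b : V) (q : G.Walk a b), q.IsPath ∧ ⌊α * k⌋₊ ≤ q.length := by
  intro m
  induction m with
  | zero =>
      intro S u v p hm hp hS _ _
      exfalso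
      have h1 : 1 ≤ k - S.card := by omega
      have := Nat.mul_le_mul_left (Fintype.card V + 1) h1
      omega
  | succ m ih =>
      intro S u v p hm hp hS hdisj hnb
      by_cases hx : ∃ x, x ∉ S ∧ x ∉ p.support ∧ G.Adj u x
      · -- extend the path
        obtain ⟨x, hxS, hxp, hadj⟩ := hx
        have hp' : (SimpleGraph.Walk.cons hadj.symm p).IsPath :=
          (SimpleGraph.Walk.cons_isPath_iff _ _).2 ⟨hp, hxp⟩
        refine ih S x v (SimpleGraph.Walk.cons hadj.symm p) ?_ hp' hS ?_ ?_
        · have hlen : (SimpleGraph.Walk.cons hadj.symm p).length < Fintype.card V :=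
            hp'.length_lt
          simp only [SimpleGraph.Walk.length_cons] at hlen ⊢
          omega
        · intro y hy hmem
          rw [SimpleGraph.Walk.support_cons] at hmem
          rcases List.mem_cons.1 hmem with h | h
          · exact hxS (h ▸ hy)
          · exact hdisj y hy h
        · intro y hy
          rw [SimpleGraph.Walk.support_cons]
          exact List.mem_cons_of_mem _ (hnb y hy)
      · push_neg at hx
        -- pop u : all neighbors of u are in S or on the path
        set S' : Finset V := insert u S with hS'def
        have huS : u ∉ S := fun h => hdisj u h p.start_mem_support
        have hS'card : S'.card = S.card + 1 := Finset.card_insert_of_notMem huS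
        have hkey : ∀ x ∈ extNbhd G S', x ∈ p.support ∧ x ≠ u := by
          intro x hxm
          rw [extNbhd, Finset.mem_filter] at hxm
          obtain ⟨-, hxS', w, hwS', hadj⟩ := hxm
          have hxu : x ≠ u := fun h => hxS' (h ▸ Finset.mem_insert_self u S)
          have hxS : x ∉ S := fun h => hxS' (Finset.mem_insert_of_mem h)
          refine ⟨?_, hxu⟩
          rcases Finset.mem_insert.1 hwS' with rfl | hwS
          · by_contra hxp
            exact hx x hxS hxp hadj
          · refine hnb x ?_
            rw [extNbhd, Finset.mem_filter]
            exact ⟨Finset.mem_univ x, hxS, w, hwS, hadj⟩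
        have hS'k : S'.card ≤ k := by omega
        by_cases hfin : S'.card = k
        · -- we are done: the current path is long
          refine ⟨u, v, p, hp, ?_⟩
          have hsub : extNbhd G S' ⊆ p.support.toFinset.erase u := by
            intro x hxm
            obtain ⟨h1, h2⟩ := hkey x hxm
            exact Finset.mem_erase.2 ⟨h2, List.mem_toFinset.2 h1⟩
          have hu : u ∈ p.support.toFinset := List.mem_toFinset.2 p.start_mem_support
          have hcard1 : (extNbhd G S').card ≤ p.support.toFinset.card - 1 := by
            have := Finset.card_le_card hsub
            rw [Finset.card_erase_of_mem hu] at this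
            exact this
          have hcard2 : p.support.toFinset.card = p.length + 1 := by
            rw [List.toFinset_card_of_nodup hp.support_nodup,
              SimpleGraph.Walk.length_support]
          have hexp' := hexp S' hS'k
          rw [hfin] at hexp'
          have hreal : α * (k : ℝ) ≤ (p.length : ℝ) := by
            refine hexp'.trans ?_
            have : (extNbhd G S').card ≤ p.length := by omega
            exact_mod_cast this
          calc ⌊α * (k : ℕ)⌋₊ ≤ ⌊((p.length : ℕ) : ℝ)⌋₊ := Nat.floor_mono hreal
            _ = p.length := Nat.floor_natCast _
        · -- pop and continue
          have hS'lt : S'.card < k := by omega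
          cases p with
          | nil =>
              -- restart at a fresh vertex
              have hys : ∃ y, y ∉ S' := by
                by_contra h
                push_neg at h
                have h2 : (Finset.univ : Finset V) ⊆ S' := fun y _ => h y
                have := Finset.card_le_card h2
                rw [Finset.card_univ] at this
                omega
              obtain ⟨y, hy⟩ := hys
              refine ih S' y y SimpleGraph.Walk.nil ?_ SimpleGraph.Walk.IsPath.nil
                hS'lt ?_ ?_
              · have h1 : k - S.card = (k - S'.card) + 1 := by omega
                rw [h1, Nat.mul_add, Nat.mul_one] at hm
                simp only [SimpleGraph.Walk.length_nil] at hm ⊢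
                omega
              · intro x hxS' hmem
                simp only [SimpleGraph.Walk.support_nil, List.mem_singleton] at hmem
                exact hy (hmem ▸ hxS')
              · intro x hxm
                obtain ⟨h1, h2⟩ := hkey x hxm
                simp only [SimpleGraph.Walk.support_nil, List.mem_singleton] at h1
                exact absurd h1 h2
          | @cons _ w _ hadj q =>
              obtain ⟨hq, huq⟩ := (SimpleGraph.Walk.cons_isPath_iff _ _).1 hp
              refine ih S' w v q ?_ hq hS'lt ?_ ?_
              · have h1 : k - S.card = (k - S'.card) + 1 := by omega
                rw [h1, Nat.mul_add, Nat.mul_one] at hm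
                simp only [SimpleGraph.Walk.length_cons] at hm
                have hql : q.length < Fintype.card V := hq.length_lt
                omega
              · intro x hxS' hmem
                rcases Finset.mem_insert.1 hxS' with rfl | hxS
                · exact huq hmem
                · exact hdisj x hxS
                    (by rw [SimpleGraph.Walk.support_cons]; exact List.mem_cons_of_mem _ hmem)
              · intro x hxm
                obtain ⟨h1, h2⟩ := hkey x hxm
                rw [SimpleGraph.Walk.support_cons] at h1
                rcases List.mem_cons.1 h1 with h | h
                · exact absurd h h2
                · exact h

theorem stmt_8 {V : Type*} [Fintype V] [DecidableEq V] (G : SimpleGraph V)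
    (k : ℕ) (α : ℝ) (hα : 1 ≤ α) (hk : 0 < k) (hcard : k < Fintype.card V)
    (hexp : ∀ U : Finset V, U.card ≤ k → α * U.card ≤ ((extNbhd G U).card : ℝ)) :
    ∃ (u v : V) (p : G.Walk u v), p.IsPath ∧ ⌊α * k⌋₊ ≤ p.length := by
  have hpos : 0 < Fintype.card V := lt_trans hk hcard
  obtain ⟨v0⟩ := Fintype.card_pos_iff.1 hpos
  refine dfs_key G k α hk hcard hexp
    ((Fintype.card V + 1) * (k - (∅ : Finset V).card) +
      (Fintype.card V - (SimpleGraph.Walk.nil : G.Walk v0 v0).length))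
    ∅ v0 v0 SimpleGraph.Walk.nil le_rfl SimpleGraph.Walk.IsPath.nil
    (by simpa using hk) (by simp) ?_
  intro x hx
  rw [extNbhd, Finset.mem_filter] at hx
  obtain ⟨-, -, w, hw, -⟩ := hx
  exact absurd hw (Finset.notMem_empty w)
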